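/- (Optimality of a policy-iteration fixed point.) Let π* be a full-support policy such that for every full-support policy π and every state s the improvement objective satisfies J_{Q^{π*}}(π*, s) ≤ J_{Q^{π*}}(π, s). Then Q^{π*}(s,a) ≥ Q^{π}(s,a) for every full-support policy π and all (s,a) ∈ S × A. -/

import Mathlib

open scoped BigOperators

variable {S A : Type*}

/-- A policy has full support if it assigns positive probability to every action
in every state. -/
def FullSupport (π : S → PMF A) : Prop :=
  ∀ s a, 0 < ((π s) a).toReal

/-- The augmented Bellman operator of TransRL:
`(T_π Q)(s,a) = r s a + γ · Σ_{s'} p(s'|s,a) · Σ_{a'} π(a'|s') ·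
  (Q(s',a') + α · log(π_TC(a'|s') / π(a'|s')))`,
where terms with `π(a'|s') = 0` contribute `0`. -/
noncomputable def augBellman [Fintype S] [Fintype A]
    (p : S → A → PMF S) (r : S → A → ℝ) (γ α : ℝ) (πTC : S → PMF A)
    (π : S → PMF A) (Q : S → A → ℝ) : S → A → ℝ :=
  fun s a => r s a + γ * ∑ s' : S, ((p s a) s').toReal *
    ∑ a' : A, ((π s') a').toReal *
      (Q s' a' + α * Real.log (((πTC s') a').toReal / ((π s') a').toReal))

/-- The per-state policy improvement objective
`J_Q(π, s) = Σ_a π(a|s) · (log π(a|s) − log π_TC(a|s) − Q(s,a)/α)`,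
with terms where `π(a|s) = 0` contributing `0`. -/
noncomputable def impObj [Fintype A] (πTC : S → PMF A) (α : ℝ)
    (Q : S → A → ℝ) (π : S → PMF A) (s : S) : ℝ :=
  ∑ a : A, ((π s) a).toReal *
    (Real.log ((π s) a).toReal - Real.log (((πTC s) a).toReal) - Q s a / α)

/-- The auxiliary state value
`V(s) = Σ_a π(a|s) · (Q(s,a) + α · log(π_TC(a|s)/π(a|s)))`. -/
noncomputable def auxValue [Fintype A] (πTC : S → PMF A) (α : ℝ)
    (Q : S → A → ℝ) (π : S → PMF A) (s : S) : ℝ :=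
  ∑ a : A, ((π s) a).toReal *
    (Q s a + α * Real.log (((πTC s) a).toReal / ((π s) a).toReal))

/-- The soft (SAC) Bellman operator:
`(T^H_π Q)(s,a) = r s a + γ · Σ_{s'} p(s'|s,a) · Σ_{a'} π(a'|s') ·
  (Q(s',a') − α · log π(a'|s'))`. -/
noncomputable def softBellman [Fintype S] [Fintype A]
    (p : S → A → PMF S) (r : S → A → ℝ) (γ α : ℝ)
    (π : S → PMF A) (Q : S → A → ℝ) : S → A → ℝ :=
  fun s a => r s a + γ * ∑ s' : S, ((p s a) s').toReal *
    ∑ a' : A, ((π s') a').toReal * (Q s' a' - α * Real.log (((π s') a').toReal))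

lemma pmf_sum_toReal {A : Type*} [Fintype A] (π : PMF A) :
    ∑ a : A, (π a).toReal = 1 := by
  rw [← ENNReal.toReal_sum (fun a _ => π.apply_ne_top a)]
  rw [← tsum_fintype (L := SummationFilter.unconditional _), π.tsum_coe, ENNReal.toReal_one]

lemma auxValue_eq_neg {S A : Type*} [Fintype A] (πTC : S → PMF A) (α : ℝ) (hα : 0 < α)
    (hTC : FullSupport πTC) (Q : S → A → ℝ) (π : S → PMF A) (hπ : FullSupport π) (s : S) :
    auxValue πTC α Q π s = -α * impObj πTC α Q π s := by
  unfold auxValue impObj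
  rw [Finset.mul_sum]
  apply Finset.sum_congr rfl
  intro a _
  rw [Real.log_div (ne_of_gt (hTC s a)) (ne_of_gt (hπ s a))]
  field_simp
  ring

theorem policy_iteration_fixed_point_optimal [Fintype S] [Fintype A] [Nonempty S] [Nonempty A]
    (p : S → A → PMF S) (r : S → A → ℝ) (γ α : ℝ)
    (hγ0 : 0 ≤ γ) (hγ1 : γ < 1) (hα : 0 < α)
    (πTC : S → PMF A) (hTC : FullSupport πTC)
    (πstar : S → PMF A) (hstar : FullSupport πstar)
    (Qstar : S → A → ℝ) (hfixStar : augBellman p r γ α πTC πstar Qstar = Qstar)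
    (hJ : ∀ π : S → PMF A, FullSupport π → ∀ s,
      impObj πTC α Qstar πstar s ≤ impObj πTC α Qstar π s) :
    ∀ π : S → PMF A, FullSupport π →
      ∀ Qπ : S → A → ℝ, augBellman p r γ α πTC π Qπ = Qπ →
        ∀ s a, Qπ s a ≤ Qstar s a := by
  intro π hπ Qπ hfix
  -- auxValue comparison
  have haux : ∀ s, auxValue πTC α Qstar π s ≤ auxValue πTC α Qstar πstar s := by
    intro s
    rw [auxValue_eq_neg πTC α hα hTC Qstar π hπ s,
        auxValue_eq_neg πTC α hα hTC Qstar πstar hstar s]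
    have := hJ π hπ s
    nlinarith
  -- T_π Qstar ≤ Qstar
  have hTle : ∀ s a, augBellman p r γ α πTC π Qstar s a ≤ Qstar s a := by
    intro s a
    conv_rhs => rw [← hfixStar]
    show r s a + γ * ∑ s' : S, ((p s a) s').toReal * auxValue πTC α Qstar π s' ≤
      r s a + γ * ∑ s' : S, ((p s a) s').toReal * auxValue πTC α Qstar πstar s'
    apply add_le_add le_rfl
    apply mul_le_mul_of_nonneg_left _ hγ0
    apply Finset.sum_le_sum
    intro s' _
    exact mul_le_mul_of_nonneg_left (haux s') ENNReal.toReal_nonneg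
  -- maximum of Qπ - Qstar
  obtain ⟨⟨s0, a0⟩, -, hmax⟩ := Finset.exists_max_image (Finset.univ : Finset (S × A))
    (fun x : S × A => Qπ x.1 x.2 - Qstar x.1 x.2) Finset.univ_nonempty
  simp only [Finset.mem_univ, forall_const] at hmax
  set M := Qπ s0 a0 - Qstar s0 a0 with hM
  have key : ∀ s a, Qπ s a - Qstar s a ≤ γ * M := by
    intro s a
    have h1 : Qπ s a - Qstar s a ≤
        augBellman p r γ α πTC π Qπ s a - augBellman p r γ α πTC π Qstar s a := by
      rw [hfix]; linarith [hTle s a]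
    have h2 : augBellman p r γ α πTC π Qπ s a - augBellman p r γ α πTC π Qstar s a =
        γ * ∑ s' : S, ((p s a) s').toReal *
          ∑ a' : A, ((π s') a').toReal * (Qπ s' a' - Qstar s' a') := by
      simp only [augBellman]
      rw [add_sub_add_left_eq_sub, ← mul_sub, ← Finset.sum_sub_distrib]
      congr 1
      apply Finset.sum_congr rfl
      intro s' _
      rw [← mul_sub, ← Finset.sum_sub_distrib]
      congr 1
      apply Finset.sum_congr rfl
      intro a' _
      ring
    have h3 : ∀ s', ∑ a' : A, ((π s') a').toReal * (Qπ s' a' - Qstar s' a') ≤ M := by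
      intro s'
      calc ∑ a' : A, ((π s') a').toReal * (Qπ s' a' - Qstar s' a')
          ≤ ∑ a' : A, ((π s') a').toReal * M := by
            apply Finset.sum_le_sum
            intro a' _
            exact mul_le_mul_of_nonneg_left (hmax (s', a')) ENNReal.toReal_nonneg
        _ = M := by rw [← Finset.sum_mul, pmf_sum_toReal, one_mul]
    have h4 : ∑ s' : S, ((p s a) s').toReal *
        ∑ a' : A, ((π s') a').toReal * (Qπ s' a' - Qstar s' a') ≤ M := by
      calc _ ≤ ∑ s' : S, ((p s a) s').toReal * M := by
            apply Finset.sum_le_sum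
            intro s' _
            exact mul_le_mul_of_nonneg_left (h3 s') ENNReal.toReal_nonneg
        _ = M := by rw [← Finset.sum_mul, pmf_sum_toReal, one_mul]
    calc Qπ s a - Qstar s a ≤ _ := h1
      _ = _ := h2
      _ ≤ γ * M := mul_le_mul_of_nonneg_left h4 hγ0
  have hM0 : M ≤ 0 := by nlinarith [key s0 a0]
  intro s a
  have := key s a
  nlinarith
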